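/- Suppose ‖𝔄_{1+n}(−t) f‖₁ ≤ n! e^{n+2} ‖f‖₁ holds for each n ≥ 0. Then for F⁰ in the Banach space L¹_α(F_H) with norm ‖f‖ = ∑_n αⁿ ‖f_n‖₁ and α > e, the series F_s(t) = ∑_{n=0}^{∞} (1/n!) Tr_{s+1,...,s+n} 𝔄_{1+n}(−t) F⁰_{s+n} converges absolutely and ‖F(t)‖_{L¹_α} ≤ e²(1 − e/α)^{-1} ‖F(0)‖_{L¹_α}. -/

import Mathlib

/-- Convergence estimate for the nonperturbative solution of the quantum BBGKY hierarchy: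
if the composed maps `T s n = Tr_{s+1,…,s+n} ∘ 𝔄_{1+n}(−t)` satisfy
`‖T s n‖ ≤ n! e^{n+2}`, then for `F⁰` in the space `𝔏¹_α` with norm `∑_n αⁿ ‖f_n‖₁` and
`α > e`, the series `F_s(t) = ∑_{n} (1/n!) T s n F⁰_{s+n}` converges absolutely and
`‖F(t)‖_{𝔏¹_α} ≤ e² (1 - e/α)⁻¹ ‖F(0)‖_{𝔏¹_α}`. -/
theorem BBGKY_solution_series_estimate
    (X : ℕ → Type*) [∀ n, NormedAddCommGroup (X n)] [∀ n, NormedSpace ℝ (X n)]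
    [∀ n, CompleteSpace (X n)]
    (α : ℝ) (hα : Real.exp 1 < α)
    (T : ∀ s n : ℕ, X (s + n) →L[ℝ] X s)
    (hT : ∀ s n : ℕ, ‖T s n‖ ≤ (n.factorial : ℝ) * Real.exp (n + 2))
    (F0 : ∀ n, X n)
    (hF0 : Summable fun n : ℕ => α ^ n * ‖F0 n‖) :
    (∀ s : ℕ, Summable fun n : ℕ => ((n.factorial : ℝ))⁻¹ * ‖T s n (F0 (s + n))‖) ∧
    ∑' s : ℕ, α ^ s * ‖∑' n : ℕ, ((n.factorial : ℝ))⁻¹ • T s n (F0 (s + n))‖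
      ≤ Real.exp 2 * (1 - Real.exp 1 / α)⁻¹ * ∑' n : ℕ, α ^ n * ‖F0 n‖ := by
  set e : ℝ := Real.exp 1 with he
  have he0 : (0:ℝ) < e := Real.exp_pos 1
  have hα0 : (0:ℝ) < α := he0.trans hα
  have hr0 : (0:ℝ) ≤ e / α := by positivity
  have hr1 : e / α < 1 := (div_lt_one hα0).2 hα
  set g : ℕ → ℝ := fun k => α ^ k * ‖F0 k‖ with hg
  have hg0 : ∀ k, 0 ≤ g k := fun k => by positivity
  -- the dominating double sequence
  set u : ℕ → ℕ → ℝ := fun n s => Real.exp 2 * (e / α) ^ n * g (s + n) with hu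
  have hu0 : ∀ n s, 0 ≤ u n s := fun n s => by
    have := hg0 (s + n); positivity
  -- exponent computation
  have hexp : ∀ n : ℕ, Real.exp ((n : ℝ) + 2) = Real.exp 2 * e ^ n := by
    intro n
    rw [Real.exp_add, he, Real.exp_one_pow, mul_comm]
  -- key pointwise estimate
  have key : ∀ s n : ℕ, α ^ s * ((n.factorial : ℝ)⁻¹ * ‖T s n (F0 (s + n))‖) ≤ u n s := by
    intro s n
    have h1 : ‖T s n (F0 (s + n))‖ ≤ (n.factorial : ℝ) * Real.exp (n + 2) * ‖F0 (s + n)‖ :=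
      le_trans ((T s n).le_opNorm _) (by
        apply mul_le_mul_of_nonneg_right (hT s n) (norm_nonneg _))
    have hfac : (0:ℝ) < (n.factorial : ℝ) := by exact_mod_cast n.factorial_pos
    have h2 : (n.factorial : ℝ)⁻¹ * ‖T s n (F0 (s + n))‖
        ≤ Real.exp ((n : ℝ) + 2) * ‖F0 (s + n)‖ := by
      calc (n.factorial : ℝ)⁻¹ * ‖T s n (F0 (s + n))‖
          ≤ (n.factorial : ℝ)⁻¹ * ((n.factorial : ℝ) * Real.exp (n + 2) * ‖F0 (s + n)‖) := by
            apply mul_le_mul_of_nonneg_left h1 (by positivity)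
        _ = Real.exp ((n : ℝ) + 2) * ‖F0 (s + n)‖ := by
            field_simp
    calc α ^ s * ((n.factorial : ℝ)⁻¹ * ‖T s n (F0 (s + n))‖)
        ≤ α ^ s * (Real.exp ((n : ℝ) + 2) * ‖F0 (s + n)‖) := by
          apply mul_le_mul_of_nonneg_left h2 (by positivity)
      _ = u n s := by
          rw [hu, hexp, hg]
          simp only [pow_add, div_pow]
          have hαn : (α : ℝ) ^ n ≠ 0 := by positivity
          field_simp
  -- summability of fibers of u in s, for fixed n
  have husum_s : ∀ n, Summable fun s => u n s := by
    intro n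
    apply Summable.mul_left
    exact (summable_nat_add_iff n).2 hF0
  -- tail sums are bounded by the total sum
  have htail : ∀ n, ∑' s, g (s + n) ≤ ∑' k, g k := by
    intro n
    exact Summable.tsum_le_tsum_of_inj (fun s => s + n) (add_left_injective n)
      (fun c _ => hg0 c) (fun s => le_rfl) ((summable_nat_add_iff n).2 hF0) hF0
  have hS0 : 0 ≤ ∑' k, g k := tsum_nonneg hg0
  -- summability of the marginal over s
  have hmarg : ∀ n, ∑' s, u n s ≤ Real.exp 2 * (e / α) ^ n * ∑' k, g k := by
    intro n
    rw [hu]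
    simp only
    rw [tsum_mul_left]
    apply mul_le_mul_of_nonneg_left (htail n) (by positivity)
  have hgeo : Summable fun n : ℕ => Real.exp 2 * (e / α) ^ n * ∑' k, g k := by
    apply Summable.mul_right
    exact (summable_geometric_of_lt_one hr0 hr1).mul_left _
  have hmargsum : Summable fun n => ∑' s, u n s := by
    apply Summable.of_nonneg_of_le (fun n => tsum_nonneg (fun s => hu0 n s)) hmarg hgeo
  -- summability of u as a function on ℕ × ℕ
  have hU : Summable fun p : ℕ × ℕ => u p.1 p.2 := by
    rw [summable_prod_of_nonneg (fun p => hu0 p.1 p.2)]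
    exact ⟨fun n => husum_s n, hmargsum⟩
  -- summability of fibers in n for fixed s (using Summable.prod_factor on swapped)
  have hUswap : Summable fun p : ℕ × ℕ => u p.2 p.1 := hU.prod_symm
  have husum_n : ∀ s, Summable fun n => u n s := fun s => hUswap.prod_factor s
  -- Part 1: summability statement
  have part1 : ∀ s : ℕ, Summable fun n : ℕ => ((n.factorial : ℝ))⁻¹ * ‖T s n (F0 (s + n))‖ := by
    intro s
    have hb : Summable fun n => (α ^ s)⁻¹ * u n s := (husum_n s).mul_left _
    apply Summable.of_nonneg_of_le (fun n => by positivity) _ hb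
    intro n
    have hαs : (0:ℝ) < α ^ s := by positivity
    calc (n.factorial : ℝ)⁻¹ * ‖T s n (F0 (s + n))‖
        = (α ^ s)⁻¹ * (α ^ s * ((n.factorial : ℝ)⁻¹ * ‖T s n (F0 (s + n))‖)) := by
          field_simp
      _ ≤ (α ^ s)⁻¹ * u n s :=
          mul_le_mul_of_nonneg_left (key s n) (by positivity)
  refine ⟨part1, ?_⟩
  -- per-s bound: α^s * ‖∑' n, ...‖ ≤ ∑' n, u n s
  have per_s : ∀ s, α ^ s * ‖∑' n : ℕ, ((n.factorial : ℝ))⁻¹ • T s n (F0 (s + n))‖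
      ≤ ∑' n, u n s := by
    intro s
    have hnorm : ∀ n : ℕ, ‖((n.factorial : ℝ))⁻¹ • T s n (F0 (s + n))‖
        = (n.factorial : ℝ)⁻¹ * ‖T s n (F0 (s + n))‖ := by
      intro n
      rw [norm_smul, Real.norm_eq_abs, abs_of_nonneg (by positivity)]
    have hsum1 : Summable fun n : ℕ => ‖((n.factorial : ℝ))⁻¹ • T s n (F0 (s + n))‖ := by
      simpa only [hnorm] using part1 s
    have h1 : ‖∑' n : ℕ, ((n.factorial : ℝ))⁻¹ • T s n (F0 (s + n))‖
        ≤ ∑' n, (n.factorial : ℝ)⁻¹ * ‖T s n (F0 (s + n))‖ := by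
      calc ‖∑' n : ℕ, ((n.factorial : ℝ))⁻¹ • T s n (F0 (s + n))‖
          ≤ ∑' n, ‖((n.factorial : ℝ))⁻¹ • T s n (F0 (s + n))‖ := norm_tsum_le_tsum_norm hsum1
        _ = _ := by exact tsum_congr hnorm
    calc α ^ s * ‖∑' n : ℕ, ((n.factorial : ℝ))⁻¹ • T s n (F0 (s + n))‖
        ≤ α ^ s * ∑' n, (n.factorial : ℝ)⁻¹ * ‖T s n (F0 (s + n))‖ := by
          apply mul_le_mul_of_nonneg_left h1 (by positivity)
      _ = ∑' n, α ^ s * ((n.factorial : ℝ)⁻¹ * ‖T s n (F0 (s + n))‖) := by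
          rw [tsum_mul_left]
      _ ≤ ∑' n, u n s := by
          apply Summable.tsum_le_tsum (fun n => key s n) ((part1 s).mul_left _) (husum_n s)
  -- summability of the marginal over n (i.e. fun s => ∑' n, u n s)
  have hmargsum2 : Summable fun s => ∑' n, u n s := by
    have := (summable_prod_of_nonneg (f := fun p : ℕ × ℕ => u p.2 p.1)
      (fun p => hu0 p.2 p.1)).1 hUswap
    exact this.2
  -- summability of the left-hand side
  have hLHS : Summable fun s : ℕ =>
      α ^ s * ‖∑' n : ℕ, ((n.factorial : ℝ))⁻¹ • T s n (F0 (s + n))‖ := by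
    apply Summable.of_nonneg_of_le (fun s => by positivity) per_s hmargsum2
  -- assemble
  calc ∑' s : ℕ, α ^ s * ‖∑' n : ℕ, ((n.factorial : ℝ))⁻¹ • T s n (F0 (s + n))‖
      ≤ ∑' s, ∑' n, u n s := Summable.tsum_le_tsum per_s hLHS hmargsum2
    _ = ∑' p : ℕ × ℕ, u p.2 p.1 := (Summable.tsum_prod' hUswap (fun s => husum_n s)).symm
    _ = ∑' p : ℕ × ℕ, u p.1 p.2 := by
        exact ((Equiv.prodComm ℕ ℕ).tsum_eq (fun p : ℕ × ℕ => u p.2 p.1)).symm ▸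
          tsum_congr (fun p => rfl)
    _ = ∑' n, ∑' s, u n s := Summable.tsum_prod' hU husum_s
    _ ≤ ∑' n, Real.exp 2 * (e / α) ^ n * ∑' k, g k := Summable.tsum_le_tsum hmarg hmargsum hgeo
    _ = Real.exp 2 * (1 - e / α)⁻¹ * ∑' k, g k := by
        rw [tsum_mul_right]
        congr 1
        rw [tsum_mul_left, tsum_geometric_of_lt_one hr0 hr1]
    _ = Real.exp 2 * (1 - Real.exp 1 / α)⁻¹ * ∑' n : ℕ, α ^ n * ‖F0 n‖ := by rw [he, hg]
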